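/- For two agents with additive valuations over a finite set M of goods, the maximin share is feasible: for any two additive valuations v1, v2 on M, there exists a partition of M into bundles A1, A2 such that v1(A1) ≥ MMS_2(v1) and v2(A2) ≥ MMS_2(v2), where MMS_2(v) = max over partitions (B1,B2) of M of min(v(B1), v(B2)). -/

import Mathlib

/-- The maximin share for 2 agents of an additive valuation given by item values `w`:
the supremum of values `x` such that some partition `(B, Bᶜ)` gives both bundles value
at least `x`. -/
noncomputable def MMS2 {M : Type*} [Fintype M] [DecidableEq M] (w : M → ℝ) : ℝ :=
  sSup {x : ℝ | ∃ B : Finset M, x ≤ ∑ e ∈ B, w e ∧ x ≤ ∑ e ∈ Bᶜ, w e}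

lemma mms2_le_min {M : Type*} [Fintype M] [DecidableEq M] (w : M → ℝ) :
    ∃ B : Finset M, MMS2 w ≤ (∑ e ∈ B, w e) ∧ MMS2 w ≤ ∑ e ∈ Bᶜ, w e := by
  obtain ⟨B0, -, hB0⟩ := Finset.exists_max_image (Finset.univ : Finset (Finset M))
    (fun B => min (∑ e ∈ B, w e) (∑ e ∈ Bᶜ, w e)) ⟨∅, Finset.mem_univ _⟩
  have key : MMS2 w ≤ min (∑ e ∈ B0, w e) (∑ e ∈ B0ᶜ, w e) := by
    unfold MMS2
    apply csSup_le
    · exact ⟨min (∑ e ∈ B0, w e) (∑ e ∈ B0ᶜ, w e), B0, min_le_left _ _, min_le_right _ _⟩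
    · rintro x ⟨B, hx1, hx2⟩
      exact le_trans (le_min hx1 hx2) (hB0 B (Finset.mem_univ _))
  exact ⟨B0, key.trans (min_le_left _ _), key.trans (min_le_right _ _)⟩

lemma mms2_le_half {M : Type*} [Fintype M] [DecidableEq M] (w : M → ℝ) (hw : ∀ e, 0 ≤ w e) :
    2 * MMS2 w ≤ ∑ e, w e := by
  have : MMS2 w ≤ (∑ e, w e) / 2 := by
    unfold MMS2
    apply csSup_le
    · exact ⟨∑ e ∈ (∅ : Finset M), w e, ∅, le_refl _, by simpa using Finset.sum_nonneg fun e _ => hw e⟩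
    rintro x ⟨B, hx1, hx2⟩
    have := Finset.sum_add_sum_compl B w
    linarith
  linarith

/-- For two agents with additive valuations over goods, the MMS is feasible. -/
theorem mms_feasible_two_agents {M : Type*} [Fintype M] [DecidableEq M]
    (w₁ w₂ : M → ℝ) (h₁ : ∀ e, 0 ≤ w₁ e) (h₂ : ∀ e, 0 ≤ w₂ e) :
    ∃ A : Finset M, MMS2 w₁ ≤ ∑ e ∈ A, w₁ e ∧ MMS2 w₂ ≤ ∑ e ∈ Aᶜ, w₂ e := by
  obtain ⟨B, hB1, hB2⟩ := mms2_le_min w₁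
  have hsum := Finset.sum_add_sum_compl B w₂
  have hhalf := mms2_le_half w₂ h₂
  rcases le_total (∑ e ∈ B, w₂ e) (∑ e ∈ Bᶜ, w₂ e) with h | h
  · exact ⟨B, hB1, by linarith⟩
  · exact ⟨Bᶜ, hB2, by rw [compl_compl]; linarith⟩
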